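/- Let p be a prime and G a non-abelian group of order p³. Then there exists an automorphism φ of G fixing the center Z(G) pointwise such that the set [G,φ] = {g⁻¹ φ(g) | g ∈ G} is not a subgroup of G. -/

import Mathlib

open Subgroup

section helpers

variable {G : Type*} [Group G]

/-- `h^n * g = g * h^n * c^n` when `h * g = g * h * c` with `c` central. -/
lemma pow_mul_comm_central {g h c : G} (hc : ∀ a : G, Commute c a)
    (hgh : h * g = g * h * c) (n : ℕ) : h ^ n * g = g * h ^ n * c ^ n := by
  induction n with
  | zero => simp
  | succ n ih =>
    have hch : c ^ n * h = h * c ^ n := ((hc h).pow_left n)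
    calc h ^ (n + 1) * g = h ^ n * (h * g) := by rw [pow_succ']; group
      _ = h ^ n * g * (h * c) := by rw [hgh]; group
      _ = g * h ^ n * c ^ n * (h * c) := by rw [ih]
      _ = g * h ^ n * (c ^ n * h) * c := by group
      _ = g * h ^ n * (h * c ^ n) * c := by rw [hch]
      _ = g * h ^ (n + 1) * c ^ (n + 1) := by rw [pow_succ, pow_succ]; group

/-- `(g*h)^n = g^n * h^n * c^(n choose 2)` when `h * g = g * h * c` with `c` central. -/
lemma mul_pow_central {g h c : G} (hc : ∀ a : G, Commute c a)
    (hgh : h * g = g * h * c) (n : ℕ) :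
    (g * h) ^ n = g ^ n * h ^ n * c ^ n.choose 2 := by
  induction n with
  | zero => simp
  | succ n ih =>
    have hcn : ∀ m : ℕ, ∀ a : G, c ^ m * a = a * c ^ m := fun m a => ((hc a).pow_left m)
    calc (g * h) ^ (n + 1) = (g * h) ^ n * (g * h) := pow_succ _ _
      _ = g ^ n * h ^ n * c ^ n.choose 2 * (g * h) := by rw [ih]
      _ = g ^ n * h ^ n * (c ^ n.choose 2 * g) * h := by group
      _ = g ^ n * h ^ n * (g * c ^ n.choose 2) * h := by rw [hcn]
      _ = g ^ n * (h ^ n * g) * (c ^ n.choose 2 * h) := by group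
      _ = g ^ n * (h ^ n * g) * (h * c ^ n.choose 2) := by rw [hcn]
      _ = g ^ n * (g * h ^ n * c ^ n) * (h * c ^ n.choose 2) := by
          rw [pow_mul_comm_central hc hgh]
      _ = g ^ (n + 1) * h ^ n * (c ^ n * h) * c ^ n.choose 2 := by
          rw [pow_succ']; group
      _ = g ^ (n + 1) * h ^ n * (h * c ^ n) * c ^ n.choose 2 := by rw [hcn]
      _ = g ^ (n + 1) * h ^ (n + 1) * (c ^ n * c ^ n.choose 2) := by
          rw [pow_succ]; group
      _ = g ^ (n + 1) * h ^ (n + 1) * c ^ (n + 1).choose 2 := by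
          rw [← pow_add, Nat.choose_succ_succ, Nat.choose_one_right, Nat.add_comm]

variable {p : ℕ} [NeZero p]

omit [NeZero p] in
lemma zhelp_nat {z : G} (hord : orderOf z = p) (m n : ℕ) (h : m ≡ n [MOD p]) :
    z ^ m = z ^ n := pow_eq_pow_iff_modEq.mpr (hord ▸ h)

lemma zhelp_add {z : G} (hord : orderOf z = p) (j k : ZMod p) :
    z ^ (j + k).val = z ^ j.val * z ^ k.val := by
  rw [← pow_add]
  exact zhelp_nat hord _ _ (by rw [ZMod.val_add]; exact Nat.mod_modEq _ _)

omit [NeZero p] in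
lemma zhelp_mul {z : G} (hord : orderOf z = p) (j k : ZMod p) :
    z ^ (j * k).val = z ^ (j.val * k.val) := by
  exact zhelp_nat hord _ _ (by rw [ZMod.val_mul]; exact Nat.mod_modEq _ _)

lemma zhelp_inj {z : G} (hord : orderOf z = p) {j k : ZMod p}
    (h : z ^ j.val = z ^ k.val) : j = k := by
  have := pow_eq_pow_iff_modEq.mp h
  rw [hord] at this
  exact ZMod.val_injective p
    ((Nat.mod_eq_of_lt (ZMod.val_lt j)) ▸ (Nat.mod_eq_of_lt (ZMod.val_lt k)) ▸ this)

lemma zhelp_int {z : G} (hord : orderOf z = p) (n : ℤ) :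
    z ^ n = z ^ ((n : ZMod p)).val := by
  have h1 : ((((n : ZMod p)).val : ℤ) : ZMod p) = (n : ZMod p) := by
    simp [ZMod.natCast_val, ZMod.intCast_zmod_cast]
  have h2 : (p : ℤ) ∣ (n - (((n : ZMod p)).val : ℤ)) := by
    rw [← ZMod.intCast_zmod_eq_zero_iff_dvd, Int.cast_sub, sub_eq_zero, eq_comm, Int.cast_natCast]
    simp [ZMod.natCast_val, ZMod.cast_id]
  obtain ⟨m, hm⟩ := h2
  have : z ^ (n : ℤ) = z ^ ((((n : ZMod p)).val : ℤ) + p * m) := by rw [← hm]; ring_nf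
  rw [this, zpow_add, zpow_natCast, zpow_mul, zpow_natCast, ← hord, pow_orderOf_eq_one,
    one_zpow, mul_one]

end helpers

section core

variable {p : ℕ} {G : Type*} [Group G]

theorem core_lemma (hp : p.Prime) [Finite G]
    (x y z : G) (hzc : z ∈ Subgroup.center G) (hz1 : z ≠ 1) (hzp : z ^ p = 1)
    (hconj : x⁻¹ * y * x = y * z)
    (hcomm : ∀ g h : G, ∃ n : ℤ, g⁻¹ * h⁻¹ * g * h = z ^ n)
    (hyzp : ∃ sy : ℕ, y ^ p = z ^ sy)
    (T : ZMod p → ZMod p)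
    (hW2 : ∀ j k : ZMod p,
      y ^ (j + k).val * z ^ (T (j + k)).val =
        y ^ j.val * z ^ (T j).val * (y ^ k.val * z ^ (T k).val) * z ^ (j * k).val) :
    ∃ φ : G ≃* G, (∀ w ∈ Subgroup.center G, φ w = w) ∧
      ¬ ∃ H : Subgroup G, (H : Set G) = {g : G | ∃ a : G, g = a⁻¹ * φ a} := by
  haveI : Fact p.Prime := ⟨hp⟩
  haveI : Fact (1 < p) := ⟨hp.one_lt⟩
  have hord : orderOf z = p := orderOf_eq_prime hzp hz1
  have hzcm : ∀ (n : ℕ) (b : G), b * z ^ n = z ^ n * b := by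
    intro n b
    have hc : Commute b z := Subgroup.mem_center_iff.mp hzc b
    exact (hc.pow_right n).eq
  have hcent_move : ∀ (b : G) (n : ℕ) (c : G), b * z ^ n * c = b * c * z ^ n := by
    intro b n c
    rw [mul_assoc, ← hzcm, ← mul_assoc]
  -- the coordinate function a
  have hacomm : ∀ h : G, ∃ k : ZMod p, h⁻¹ * y * h = y * z ^ k.val := by
    intro h
    obtain ⟨n, hn⟩ := hcomm y h
    refine ⟨(n : ZMod p), ?_⟩
    rw [← zhelp_int hord, ← hn]
    group
  set a : G → ZMod p := fun h => (hacomm h).choose with ha_def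
  have haS : ∀ h : G, h⁻¹ * y * h = y * z ^ (a h).val := fun h => (hacomm h).choose_spec
  have haU : ∀ (h : G) (k : ZMod p), h⁻¹ * y * h = y * z ^ k.val → a h = k := by
    intro h k hk
    exact zhelp_inj hord (mul_left_cancel ((haS h).symm.trans hk))
  have ha_mul : ∀ g h : G, a (g * h) = a g + a h := by
    intro g h
    apply haU
    calc (g * h)⁻¹ * y * (g * h)
        = h⁻¹ * (g⁻¹ * y * g) * h := by group
      _ = h⁻¹ * (y * z ^ (a g).val) * h := by rw [haS g]
      _ = (h⁻¹ * y * h) * z ^ (a g).val := by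
          rw [← mul_assoc, hcent_move]
      _ = y * z ^ (a h).val * z ^ (a g).val := by rw [haS h]
      _ = y * z ^ (a g + a h).val := by
          rw [zhelp_add hord, mul_assoc, ← pow_add, ← pow_add, Nat.add_comm]
  have hax : a x = 1 := by
    apply haU
    rw [ZMod.val_one, pow_one]
    exact hconj
  -- the twisting map w
  set w : ZMod p → G := fun k => y ^ k.val * z ^ (T k).val with hw_def
  have hw2' : ∀ j k : ZMod p, w (j + k) = w j * w k * z ^ (j * k).val := hW2
  have hw0 : w 0 = 1 := by
    have h0 := hw2' 0 0
    rw [add_zero, mul_zero, ZMod.val_zero, pow_zero, mul_one] at h0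
    exact mul_eq_left.mp h0.symm
  have hcwy : ∀ k : ZMod p, y * w k = w k * y := fun k =>
    (((Commute.refl y).pow_right k.val).mul_right (hzcm (T k).val y)).eq
  have ha_w : ∀ k : ZMod p, a (w k) = 0 := by
    intro k
    apply haU
    rw [ZMod.val_zero, pow_zero, mul_one]
    calc (w k)⁻¹ * y * w k = (w k)⁻¹ * (y * w k) := by group
      _ = (w k)⁻¹ * (w k * y) := by rw [hcwy]
      _ = y := by group
  -- conjugation of w
  have hconjw : ∀ (h : G) (k : ZMod p), w k * h = h * (w k * z ^ (k * a h).val) := by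
    intro h k
    have h1 : h⁻¹ * y ^ k.val * h = (y * z ^ (a h).val) ^ k.val := by
      rw [← haS h]
      have := map_pow (MulAut.conj h⁻¹) y k.val
      simp only [MulAut.conj_apply, inv_inv] at this
      exact this
    have hc : Commute y (z ^ (a h).val) := hzcm (a h).val y
    have h2 : (y * z ^ (a h).val) ^ k.val = y ^ k.val * z ^ ((a h).val * k.val) := by
      rw [hc.mul_pow, ← pow_mul]
    have key : h⁻¹ * w k * h = w k * z ^ ((k * a h).val) := by
      calc h⁻¹ * (y ^ k.val * z ^ (T k).val) * h
          = (h⁻¹ * y ^ k.val * h) * z ^ (T k).val := by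
            rw [← mul_assoc, hcent_move]
        _ = y ^ k.val * z ^ ((a h).val * k.val) * z ^ (T k).val := by rw [h1, h2]
        _ = y ^ k.val * z ^ (T k).val * z ^ ((a h).val * k.val) := by
            rw [mul_assoc, mul_assoc, ← pow_add, ← pow_add, Nat.add_comm]
        _ = w k * z ^ (k.val * (a h).val) := by rw [Nat.mul_comm]
        _ = w k * z ^ ((k * a h).val) := by rw [← zhelp_mul hord]
    rw [← key]; group
  -- the twisted map is a homomorphism
  have hψ : ∀ g h : G, (g * h) * w (a (g * h)) = (g * w (a g)) * (h * w (a h)) := by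
    intro g h
    rw [ha_mul, hw2']
    calc g * h * (w (a g) * w (a h) * z ^ ((a g) * (a h)).val)
        = g * h * (w (a g) * (w (a h) * z ^ ((a g) * (a h)).val)) := by group
      _ = g * h * (w (a g) * (z ^ ((a g) * (a h)).val * w (a h))) := by rw [hzcm]
      _ = g * (h * (w (a g) * z ^ ((a g) * (a h)).val)) * w (a h) := by group
      _ = g * (w (a g) * h) * w (a h) := by rw [← hconjw]
      _ = (g * w (a g)) * (h * w (a h)) := by group
  set Ψ : G →* G := MonoidHom.mk' (fun g => g * w (a g)) (fun g h => hψ g h) with hΨ_def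
  have hΨ_app : ∀ g : G, Ψ g = g * w (a g) := fun g => rfl
  have hinj : Function.Injective Ψ := by
    intro g h hgh
    have h1 : a (Ψ g) = a g := by rw [hΨ_app, ha_mul, ha_w, add_zero]
    have h2 : a (Ψ h) = a h := by rw [hΨ_app, ha_mul, ha_w, add_zero]
    have hagh : a g = a h := by rw [← h1, ← h2, hgh]
    have : g * w (a g) = h * w (a g) := by
      rw [← hΨ_app g, hgh, hΨ_app, hagh]
    exact mul_right_cancel this
  have hbij : Function.Bijective Ψ := ⟨hinj, Finite.surjective_of_injective hinj⟩
  refine ⟨MulEquiv.ofBijective Ψ hbij, ?_, ?_⟩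
  · intro c hc
    have hac : a c = 0 := by
      apply haU
      rw [ZMod.val_zero, pow_zero, mul_one]
      have := (Subgroup.mem_center_iff.mp hc) y
      calc c⁻¹ * y * c = c⁻¹ * (y * c) := by group
        _ = c⁻¹ * (c * y) := by rw [← this]
        _ = y := by group
    show Ψ c = c
    rw [hΨ_app, hac, hw0, mul_one]
  · rintro ⟨H, hH⟩
    have hSet : ∀ g : G, g ∈ H ↔ ∃ b : G, g = b⁻¹ * Ψ b := by
      intro g
      have := Set.ext_iff.mp hH g
      simpa using this
    have h1mem : w 1 ∈ H := by
      rw [hSet]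
      refine ⟨x, ?_⟩
      rw [hΨ_app, hax]
      group
    obtain ⟨g, hg⟩ := (hSet _).mp (H.mul_mem h1mem h1mem)
    rw [hΨ_app] at hg
    have hg' : w 1 * w 1 = w (a g) := by rw [hg]; group
    have h2 := hw2' 1 1
    rw [one_mul, ZMod.val_one, pow_one, hg'] at h2
    -- h2 : w (1 + 1) = w 1 * w 1 * z = w (a g) * z
    set k := a g with hk_def
    set t : ZMod p := 1 + 1 with ht_def
    -- main case analysis
    by_cases hkt : k = t
    · rw [← hkt] at h2
      exact hz1 (left_eq_mul.mp h2)
    · -- k ≠ t : derive that y is central, contradiction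
      have hvne : k.val ≠ t.val := fun h => hkt (ZMod.val_injective p h)
      have hE : y ^ t.val * z ^ (T t).val = y ^ k.val * z ^ ((T k).val + 1) := by
        have := h2
        rw [hw_def] at this
        simp only at this
        rw [pow_succ, ← mul_assoc]
        exact this
      have hA : (y ^ k.val)⁻¹ * y ^ t.val = z ^ ((T k).val + 1) * (z ^ (T t).val)⁻¹ := by
        have hy : y ^ t.val = y ^ k.val * (z ^ ((T k).val + 1) * (z ^ (T t).val)⁻¹) := by
          apply mul_right_cancel (b := z ^ (T t).val)
          rw [hE]; group
        rw [hy]; group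
      have hyd : y ^ ((t.val : ℤ) - (k.val : ℤ)) ∈ Subgroup.zpowers z := by
        have hcom : (y ^ k.val)⁻¹ * y ^ t.val = y ^ t.val * (y ^ k.val)⁻¹ :=
          (((Commute.refl y).pow_pow k.val t.val).inv_left).eq
        have : y ^ ((t.val : ℤ) - (k.val : ℤ)) = z ^ ((T k).val + 1) * (z ^ (T t).val)⁻¹ := by
          rw [zpow_sub, zpow_natCast, zpow_natCast, ← hcom, hA]
        rw [this]
        exact mul_mem (pow_mem (Subgroup.mem_zpowers z) _)
          (inv_mem (pow_mem (Subgroup.mem_zpowers z) _))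
      have hd0 : (t.val : ℤ) - (k.val : ℤ) ≠ 0 := by
        intro h
        have hv : t.val = k.val := by omega
        exact hvne hv.symm
      have hpd : ¬ ((p : ℤ) ∣ (t.val : ℤ) - (k.val : ℤ)) := by
        intro h
        have h1 : (t.val : ℤ) - (k.val : ℤ) < p := by
          have := ZMod.val_lt t
          omega
        have h2 : -(p : ℤ) < (t.val : ℤ) - (k.val : ℤ) := by
          have := ZMod.val_lt k
          omega
        obtain ⟨m, hm⟩ := h
        have hp0 : (0:ℤ) < p := by exact_mod_cast hp.pos
        have : m = 0 := by nlinarith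
        rw [this, mul_zero] at hm
        exact hd0 hm
      have hnd : ¬ (p ∣ ((t.val : ℤ) - (k.val : ℤ)).natAbs) := by
        intro h
        exact hpd (Int.natAbs_dvd_natAbs.mp (by simpa using h))
      have hcop : IsCoprime ((t.val : ℤ) - (k.val : ℤ)) (p : ℤ) := by
        rw [Int.isCoprime_iff_gcd_eq_one]
        have h1 : Nat.Coprime p ((t.val : ℤ) - (k.val : ℤ)).natAbs :=
          (hp.coprime_iff_not_dvd).mpr hnd
        simpa [Int.gcd] using (Nat.coprime_comm.mp h1)
      obtain ⟨u, v, huv⟩ := hcop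
      have hyz : y ∈ Subgroup.zpowers z := by
        obtain ⟨sy, hsy⟩ := hyzp
        have hyp' : y ^ (p : ℤ) ∈ Subgroup.zpowers z := by
          rw [zpow_natCast, hsy]
          exact pow_mem (Subgroup.mem_zpowers z) _
        have h3 : y = (y ^ ((t.val : ℤ) - (k.val : ℤ))) ^ u * (y ^ (p : ℤ)) ^ v := by
          rw [← zpow_mul, ← zpow_mul, ← zpow_add, Int.mul_comm, Int.mul_comm (p:ℤ) v, huv,
            zpow_one]
        rw [h3]
        exact mul_mem (zpow_mem hyd u) (zpow_mem hyp' v)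
      have hycen : y ∈ Subgroup.center G := (Subgroup.zpowers_le.mpr hzc) hyz
      have hxy := (Subgroup.mem_center_iff.mp hycen) x
      have : x⁻¹ * y * x = y := by
        calc x⁻¹ * y * x = x⁻¹ * (y * x) := by group
          _ = x⁻¹ * (x * y) := by rw [← hxy]
          _ = y := by group
      rw [hconj] at this
      exact hz1 (mul_eq_left.mp this)

end core

section outer

/-- The `W2` identity for `p = 2`, with `T = 0`. -/
lemma hW2_p2 {G : Type*} [Group G] {y c : G} (hy2 : y ^ 2 = c) (hc2 : c ^ 2 = 1)
    (hcy : y * c = c * y) :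
    ∀ j k : ZMod 2, y ^ (j + k).val * c ^ ((fun _ : ZMod 2 => (0 : ZMod 2)) (j + k)).val =
      y ^ j.val * c ^ ((fun _ : ZMod 2 => (0 : ZMod 2)) j).val *
        (y ^ k.val * c ^ ((fun _ : ZMod 2 => (0 : ZMod 2)) k).val) *
        c ^ (j * k).val := by
  have hd : ∀ m : ZMod 2, m = 0 ∨ m = 1 := by decide
  have hyy : y * y = c := by rw [← pow_two]; exact hy2
  have hcc : c * c = 1 := by rw [← pow_two]; exact hc2
  intro j k
  have e1 : ZMod.val (1 : ZMod 2) = 1 := rfl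
  have e2 : ((1 + 1 : ZMod 2)).val = 0 := rfl
  have e3 : ((1 * 1 : ZMod 2)).val = 1 := rfl
  simp only [ZMod.val_zero, pow_zero, mul_one]
  rcases hd j with rfl | rfl <;> rcases hd k with rfl | rfl <;>
    simp only [zero_add, add_zero, mul_zero, zero_mul, mul_one, one_mul, e1, e2, e3,
      ZMod.val_zero, pow_zero, pow_one, mul_one, one_mul]
  rw [hyy, hcc]


/-- Let `p` be a prime and `G` a non-abelian group of order `p³`.  Then there exists an
automorphism `φ` of `G` fixing the center pointwise such that
`[G,φ] = {g⁻¹ φ(g) | g ∈ G}` is not a subgroup of `G`. -/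
theorem extraspecial_building_block_bad_automorphism (p : ℕ) (hp : p.Prime)
    (G : Type*) [Group G] (hcard : Nat.card G = p ^ 3)
    (hnab : ∃ a b : G, a * b ≠ b * a) :
    ∃ φ : G ≃* G, (∀ z ∈ Subgroup.center G, φ z = z) ∧
      ¬ ∃ H : Subgroup G, (H : Set G) = {g : G | ∃ a : G, g = a⁻¹ * φ a} := by
  haveI : Fact p.Prime := ⟨hp⟩
  haveI : Fact (1 < p) := ⟨hp.one_lt⟩
  have hfin : Finite G := Nat.finite_of_card_ne_zero (by rw [hcard]; exact pow_ne_zero 3 hp.pos.ne')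
  have hnt : Nontrivial G := by
    have h1 : 1 < Nat.card G := by
      rw [hcard]; exact Nat.one_lt_pow (by norm_num) hp.one_lt
    exact Finite.one_lt_card_iff_nontrivial.mp h1
  obtain ⟨a0, b0, hab⟩ := hnab
  -- the quotient by the center is not cyclic
  have hnotcyc : ¬ IsCyclic (G ⧸ Subgroup.center G) := by
    intro hcy
    exact hab (commutative_of_cyclic_center_quotient (QuotientGroup.mk' (Subgroup.center G))
      (QuotientGroup.ker_mk' (Subgroup.center G)).le a0 b0)
  -- the center has order p
  have hZcard : Nat.card (Subgroup.center G) = p := by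
    have hdvd : Nat.card (Subgroup.center G) ∣ p ^ 3 := by
      rw [← hcard]; exact Subgroup.card_subgroup_dvd_card _
    obtain ⟨i, hile, hi⟩ := (Nat.dvd_prime_pow hp).mp hdvd
    haveI hZnt : Nontrivial (Subgroup.center G) :=
      IsPGroup.center_nontrivial (IsPGroup.of_card hcard)
    have h1 : 1 < Nat.card (Subgroup.center G) := Finite.one_lt_card
    interval_cases i
    · rw [hi] at h1; norm_num at h1
    · rw [hi, pow_one]
    · -- center of index p : quotient cyclic, contradiction
      exfalso
      apply hnotcyc
      have hq : Nat.card (G ⧸ Subgroup.center G) = p := by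
        have := Subgroup.card_eq_card_quotient_mul_card_subgroup (Subgroup.center G)
        rw [hcard, hi] at this
        have hppos : 0 < p := hp.pos
        have : p ^ 3 = Nat.card (G ⧸ Subgroup.center G) * p ^ 2 := this
        nlinarith [this, Nat.card_pos (α := G ⧸ Subgroup.center G)]
      haveI := Fact.mk hp
      exact isCyclic_of_prime_card hq
    · -- center is everything : G commutative, contradiction
      exfalso
      have : Subgroup.center G = ⊤ := Subgroup.eq_top_of_card_eq _ (by rw [hi, ← hcard])
      apply hab
      have hb : b0 ∈ Subgroup.center G := by rw [this]; trivial
      exact Subgroup.mem_center_iff.mp hb a0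
  -- every central element has order dividing p
  have hcenp : ∀ c : G, c ∈ Subgroup.center G → c ^ p = 1 := by
    intro c hc
    have h1 : (⟨c, hc⟩ : Subgroup.center G) ^ p = 1 := by
      rw [← hZcard]; exact pow_card_eq_one'
    have := congrArg (Subtype.val) h1
    simpa using this
  -- the quotient by the center has order p²
  have hQcard : Nat.card (G ⧸ Subgroup.center G) = p ^ 2 := by
    have h0 := Subgroup.card_eq_card_quotient_mul_card_subgroup (Subgroup.center G)
    rw [hcard, hZcard] at h0
    nlinarith [h0, Nat.card_pos (α := G ⧸ Subgroup.center G), hp.pos]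
  -- commutators are central
  have hcommZ : ∀ g h : G, g⁻¹ * h⁻¹ * g * h ∈ Subgroup.center G := by
    intro g h
    have hQcomm := IsPGroup.commutative_of_card_eq_prime_sq hQcard
    rw [← QuotientGroup.eq_one_iff]
    have heq : ((g⁻¹ * h⁻¹ * g * h : G) : G ⧸ Subgroup.center G) =
        (g : G ⧸ Subgroup.center G)⁻¹ * (h : G ⧸ Subgroup.center G)⁻¹ *
        (g : G ⧸ Subgroup.center G) * (h : G ⧸ Subgroup.center G) := by
      push_cast; rfl
    rw [heq]
    calc (g : G ⧸ Subgroup.center G)⁻¹ * (h : G ⧸ Subgroup.center G)⁻¹ *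
          (g : G ⧸ Subgroup.center G) * (h : G ⧸ Subgroup.center G)
        = (g : G ⧸ Subgroup.center G)⁻¹ * (h : G ⧸ Subgroup.center G)⁻¹ *
          ((g : G ⧸ Subgroup.center G) * (h : G ⧸ Subgroup.center G)) := by group
      _ = (g : G ⧸ Subgroup.center G)⁻¹ * (h : G ⧸ Subgroup.center G)⁻¹ *
          ((h : G ⧸ Subgroup.center G) * (g : G ⧸ Subgroup.center G)) := by
            rw [hQcomm (g : G ⧸ Subgroup.center G) (h : G ⧸ Subgroup.center G)]
      _ = 1 := by group
  -- p-th powers are central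
  have hgp : ∀ g : G, g ^ p ∈ Subgroup.center G := by
    intro g
    by_contra hns
    apply hnotcyc
    have h1 : ((g : G ⧸ Subgroup.center G)) ^ p ≠ 1 := by
      intro h
      apply hns
      rw [← QuotientGroup.eq_one_iff]
      have : ((g ^ p : G) : G ⧸ Subgroup.center G) = (g : G ⧸ Subgroup.center G) ^ p := by
        push_cast; rfl
      rw [this, h]
    have hdvd : orderOf (g : G ⧸ Subgroup.center G) ∣ p ^ 2 := by
      rw [← hQcard]; exact orderOf_dvd_natCard _
    obtain ⟨i, hile, hi⟩ := (Nat.dvd_prime_pow hp).mp hdvd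
    have hi2 : i = 2 := by
      by_contra hne
      have h4 : orderOf (g : G ⧸ Subgroup.center G) ∣ p ^ 1 := by
        rw [hi]
        exact pow_dvd_pow p (by omega)
      rw [pow_one] at h4
      exact h1 (orderOf_dvd_iff_pow_eq_one.mp h4)
    exact isCyclic_of_orderOf_eq_card _ (by rw [hi, hi2, hQcard])
  -- now construct the data x, y, z, T
  obtain ⟨x, y, z, T, hzc, hz1, hconj, hyzp, hW2⟩ :
      ∃ (x y z : G) (T : ZMod p → ZMod p), z ∈ Subgroup.center G ∧ z ≠ 1 ∧
        x⁻¹ * y * x = y * z ∧ (∃ sy : ℕ, y ^ p = z ^ sy) ∧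
        (∀ j k : ZMod p,
          y ^ (j + k).val * z ^ (T (j + k)).val =
            y ^ j.val * z ^ (T j).val * (y ^ k.val * z ^ (T k).val) * z ^ (j * k).val) := by
    by_cases hp2 : p = 2
    · -- the case p = 2
      subst hp2
      set c := b0⁻¹ * a0⁻¹ * b0 * a0 with hc_def
      have hcmem : c ∈ Subgroup.center G := hcommZ b0 a0
      have hc1 : c ≠ 1 := by
        intro h
        apply hab
        have h2 : b0 * a0 = (a0 * b0) * c := by rw [hc_def]; group
        rw [h, mul_one] at h2
        exact h2.symm
      have hc2 : c ^ 2 = 1 := hcenp c hcmem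
      have hccc : c * c = 1 := by rw [← pow_two]; exact hc2
      have hcvcomm : ∀ g : G, g * c = c * g := fun g => Subgroup.mem_center_iff.mp hcmem g
      have hordc : orderOf c = 2 := orderOf_eq_prime hc2 hc1
      have hvu : b0 * a0 = a0 * b0 * c := by rw [hc_def]; group
      have hconjvu : a0⁻¹ * b0 * a0 = b0 * c := by rw [hc_def]; group
      have hdich : ∀ w : G, w ∈ Subgroup.center G → w = 1 ∨ w = c := by
        intro w hw
        have hle : Subgroup.zpowers c ≤ Subgroup.center G := Subgroup.zpowers_le.mpr hcmem
        have hZeqc : Subgroup.center G = Subgroup.zpowers c :=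
          (Subgroup.eq_of_le_of_card_ge hle (by rw [hZcard, Nat.card_zpowers, hordc])).symm
        rw [hZeqc] at hw
        obtain ⟨n, hn⟩ := Subgroup.mem_zpowers_iff.mp hw
        rw [← hn, zhelp_int hordc n]
        have hv := ZMod.val_lt (n : ZMod 2)
        have : ((n : ZMod 2)).val = 0 ∨ ((n : ZMod 2)).val = 1 := by omega
        rcases this with h | h <;> rw [h] <;> simp
      rcases hdich _ (hgp b0) with hv2 | hv2
      · rcases hdich _ (hgp a0) with hu2 | hu2
        · -- both squares trivial : take y = a0 * b0
          have hy2 : (a0 * b0) ^ 2 = c := by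
            calc (a0 * b0) ^ 2 = a0 * (b0 * a0) * b0 := by rw [pow_two]; group
              _ = a0 * (a0 * b0 * c) * b0 := by rw [hvu]
              _ = a0 * a0 * b0 * (c * b0) := by group
              _ = a0 * a0 * b0 * (b0 * c) := by rw [← hcvcomm b0]
              _ = a0 ^ 2 * (b0 ^ 2) * c := by rw [pow_two, pow_two]; group
              _ = c := by rw [hu2, hv2, one_mul, one_mul]
          have hconj' : a0⁻¹ * (a0 * b0) * a0 = (a0 * b0) * c := by
            calc a0⁻¹ * (a0 * b0) * a0 = b0 * a0 := by group
              _ = a0 * b0 * c := hvu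
          exact ⟨a0, a0 * b0, c, fun _ => 0, hcmem, hc1, hconj',
            ⟨1, by rw [pow_one]; exact hy2⟩, hW2_p2 hy2 hc2 (hcvcomm (a0 * b0))⟩
        · -- a0 squares to c : take x = b0, y = a0
          have h1 : a0⁻¹ * b0⁻¹ * a0 * b0 = c⁻¹ := by rw [hc_def]; group
          have hcinv : c⁻¹ = c := inv_eq_of_mul_eq_one_right hccc
          have hconj' : b0⁻¹ * a0 * b0 = a0 * c := by
            calc b0⁻¹ * a0 * b0 = a0 * (a0⁻¹ * b0⁻¹ * a0 * b0) := by group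
              _ = a0 * c⁻¹ := by rw [h1]
              _ = a0 * c := by rw [hcinv]
          exact ⟨b0, a0, c, fun _ => 0, hcmem, hc1, hconj',
            ⟨1, by rw [pow_one]; exact hu2⟩, hW2_p2 hu2 hc2 (hcvcomm a0)⟩
      · -- b0 squares to c : take x = a0, y = b0
        exact ⟨a0, b0, c, fun _ => 0, hcmem, hc1, hconjvu,
          ⟨1, by rw [pow_one]; exact hv2⟩, hW2_p2 hv2 hc2 (hcvcomm b0)⟩
    · -- the case p odd
      have hodd : Odd p := hp.odd_of_ne_two hp2
      -- the p-th power map is a homomorphism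
      have hhom : ∀ g h : G, (g * h) ^ p = g ^ p * h ^ p := by
        intro g h
        have hcmem : h⁻¹ * g⁻¹ * h * g ∈ Subgroup.center G := hcommZ h g
        have hcc : ∀ b : G, Commute (h⁻¹ * g⁻¹ * h * g) b := by
          intro b
          have hb : Commute b (h⁻¹ * g⁻¹ * h * g) := Subgroup.mem_center_iff.mp hcmem b
          exact hb.symm
        have hgh : h * g = g * h * (h⁻¹ * g⁻¹ * h * g) := by group
        have hmp := mul_pow_central hcc hgh p
        have hchoose : (h⁻¹ * g⁻¹ * h * g) ^ p.choose 2 = 1 := by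
          obtain ⟨m, hm⟩ := hodd
          have h2 : p.choose 2 = p * m := by
            rw [Nat.choose_two_right]
            have hsub : p - 1 = 2 * m := by omega
            rw [hsub, Nat.mul_div_assoc p ⟨m, rfl⟩, Nat.mul_div_cancel_left m (by norm_num)]
          rw [h2, pow_mul, hcenp _ hcmem, one_pow]
        rw [hmp, hchoose, mul_one]
      set P : G →* G := MonoidHom.mk' (fun g => g ^ p) hhom with hP_def
      have hexists : ∃ y : G, y ^ p = 1 ∧ y ∉ Subgroup.center G := by
        by_contra hno
        push_neg at hno
        have hle : P.ker ≤ Subgroup.center G := by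
          intro g hgk
          have hg1 : g ^ p = 1 := hgk
          exact hno g hg1
        have hk_le : Nat.card P.ker ≤ p := by
          rw [← hZcard]; exact Subgroup.card_le_of_le hle
        have h1 := Subgroup.card_eq_card_quotient_mul_card_subgroup P.ker
        have h2 : Nat.card (G ⧸ P.ker) = Nat.card P.range :=
          Nat.card_congr (QuotientGroup.quotientKerEquivRange P).toEquiv
        have h3 : Nat.card P.range ≤ p := by
          rw [← hZcard]
          apply Subgroup.card_le_of_le
          rintro w ⟨g, rfl⟩
          exact hgp g
        rw [hcard, h2] at h1
        nlinarith [hp.two_le, Nat.card_pos (α := P.range), Nat.card_pos (α := P.ker)]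
      obtain ⟨y, hyp1, hyc⟩ := hexists
      have hxe : ∃ x : G, x * y ≠ y * x := by
        by_contra h
        push_neg at h
        exact hyc (Subgroup.mem_center_iff.mpr h)
      obtain ⟨x, hxy⟩ := hxe
      set z : G := y⁻¹ * (x⁻¹ * y * x) with hz_def
      set T : ZMod p → ZMod p := fun k => (k * k + k) * (2 : ZMod p)⁻¹ with hT_def
      have hzc : z ∈ Subgroup.center G := by
        have he : z = y⁻¹ * x⁻¹ * y * x := by rw [hz_def]; group
        rw [he]; exact hcommZ y x
      have hconj : x⁻¹ * y * x = y * z := by rw [hz_def]; group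
      have hz1 : z ≠ 1 := by
        intro h
        have h2 : x⁻¹ * y * x = y := by
          have h3 : y * z = y * 1 := by rw [h]
          rw [mul_one] at h3
          rw [hconj, h3]
        apply hxy
        have h4 : y * x = x * y := by
          calc y * x = x * (x⁻¹ * y * x) := by group
            _ = x * y := by rw [h2]
        exact h4.symm
      have hzp1 : z ^ p = 1 := hcenp z hzc
      have hordz : orderOf z = p := orderOf_eq_prime hzp1 hz1
      have hzcm : ∀ (n : ℕ) (b : G), b * z ^ n = z ^ n * b := by
        intro n b
        have hb : Commute b z := Subgroup.mem_center_iff.mp hzc b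
        exact (hb.pow_right n).eq
      have h2ne : (2 : ZMod p) ≠ 0 := by
        intro h
        have hd2 : (p : ℕ) ∣ 2 := by
          have h2 : ((2 : ℕ) : ZMod p) = 0 := by exact_mod_cast h
          exact (ZMod.natCast_eq_zero_iff 2 p).mp h2
        exact hp2 ((Nat.prime_dvd_prime_iff_eq hp Nat.prime_two).mp hd2)
      have hTadd : ∀ j k : ZMod p, T (j + k) = T j + T k + j * k := by
        intro j k
        rw [hT_def]
        simp only
        field_simp
        ring
      have hW2 : ∀ j k : ZMod p,
          y ^ (j + k).val * z ^ (T (j + k)).val =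
            y ^ j.val * z ^ (T j).val * (y ^ k.val * z ^ (T k).val) * z ^ (j * k).val := by
        intro j k
        have hy_add : y ^ (j + k).val = y ^ j.val * y ^ k.val := by
          rw [← pow_add]
          apply pow_eq_pow_iff_modEq.mpr
          apply Nat.ModEq.of_dvd (orderOf_dvd_of_pow_eq_one hyp1)
          rw [ZMod.val_add]
          exact Nat.mod_modEq _ _
        have hz_split : z ^ (T (j + k)).val =
            z ^ (T j).val * z ^ (T k).val * z ^ (j * k).val := by
          rw [hTadd, zhelp_add hordz, zhelp_add hordz]
        rw [hy_add, hz_split]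
        calc y ^ j.val * y ^ k.val * (z ^ (T j).val * z ^ (T k).val * z ^ (j * k).val)
            = y ^ j.val * (y ^ k.val * z ^ (T j).val) * z ^ (T k).val * z ^ (j * k).val := by
              simp only [mul_assoc]
          _ = y ^ j.val * (z ^ (T j).val * y ^ k.val) * z ^ (T k).val * z ^ (j * k).val := by
              rw [hzcm (T j).val (y ^ k.val)]
          _ = y ^ j.val * z ^ (T j).val * (y ^ k.val * z ^ (T k).val) * z ^ (j * k).val := by
              simp only [mul_assoc]
      exact ⟨x, y, z, T, hzc, hz1, hconj, ⟨0, by rw [hyp1, pow_zero]⟩, hW2⟩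
  -- common tail : apply the core lemma
  have hzp1 : z ^ p = 1 := hcenp z hzc
  have hordz : orderOf z = p := orderOf_eq_prime hzp1 hz1
  have hZeq : Subgroup.center G = Subgroup.zpowers z := by
    have hle : Subgroup.zpowers z ≤ Subgroup.center G := Subgroup.zpowers_le.mpr hzc
    have hcz : Nat.card (Subgroup.zpowers z) = p := by rw [Nat.card_zpowers, hordz]
    exact (Subgroup.eq_of_le_of_card_ge hle (by rw [hZcard, hcz])).symm
  have hcommι : ∀ g h : G, ∃ n : ℤ, g⁻¹ * h⁻¹ * g * h = z ^ n := by
    intro g h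
    have hm := hcommZ g h
    rw [hZeq] at hm
    obtain ⟨n, hn⟩ := Subgroup.mem_zpowers_iff.mp hm
    exact ⟨n, hn.symm⟩
  exact core_lemma hp x y z hzc hz1 hzp1 hconj hcommι hyzp T hW2

end outer
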